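/- arXiv:1811.08021 — 3 statements merged into one kernel-verified Lean document; each statement's English description precedes it below -/
import Mathlib

section
/- Let $[x_k]_{k=0}^N$ be defined by $x_N = e_N$, $x_0 = G_{0,N} x_N + e_0$, and $x_k = G_{k,k-1} x_{k-1} + G_{k,N} x_N + e_k$ for $k \in [1,N-1]$, where $[e_k]$ are independent zero-mean Gaussian vectors with positive definite covariances. Then conditioned on $x_N$, the sequence $[x_k]_{k=0}^{N-1}$ is Markov; i.e., $[x_k]$ is $CM_L$. -/
open MeasureTheory ProbabilityTheory Matrix

noncomputable def gaussianPDF {ι : Type*} [Fintype ι] [DecidableEq ι]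
    (μ : ι → ℝ) (S : Matrix ι ι ℝ) (x : ι → ℝ) : ℝ :=
  (Real.sqrt ((2 * Real.pi) ^ (Fintype.card ι) * S.det))⁻¹ *
    Real.exp (-(1 / 2) * ((x - μ) ⬝ᵥ S⁻¹ *ᵥ (x - μ)))

/-- \$M_{N|k} = M_{N,N-1} ⋯ M_{k+1,k}\$ (with \$M_{N|N} = I\$), where \$F n = M_{n,n-1}\$. -/
noncomputable def Mtrans {d : ℕ} (F : ℕ → Matrix (Fin d) (Fin d) ℝ) (N k : ℕ) :
    Matrix (Fin d) (Fin d) ℝ :=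
  (((List.Ico (k + 1) (N + 1)).reverse).map F).prod

/-- \$C_{N|k} = ∑_{n=k}^{N-1} M_{N|n+1} M_{n+1} M_{N|n+1}^T\$. -/
noncomputable def Ctrans {d : ℕ} (F M : ℕ → Matrix (Fin d) (Fin d) ℝ) (N k : ℕ) :
    Matrix (Fin d) (Fin d) ℝ :=
  ∑ n ∈ Finset.Ico k N, Mtrans F N (n + 1) * M (n + 1) * (Mtrans F N (n + 1))ᵀ

noncomputable def marg {d N : ℕ} (p : (Fin (N + 1) → (Fin d → ℝ)) → ℝ)
    (S : Finset (Fin (N + 1))) (x : Fin (N + 1) → (Fin d → ℝ)) : ℝ :=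
  ∫ y : {i : Fin (N + 1) // i ∉ S} → (Fin d → ℝ),
    p (fun i => if h : i ∈ S then x i else y ⟨i, h⟩)

def IsMarkov {d N : ℕ} (p : (Fin (N + 1) → (Fin d → ℝ)) → ℝ) : Prop :=
  ∀ j k : Fin (N + 1), j < k → ∀ x,
    marg p (insert k (Finset.Iic j)) x * marg p {j} x
      = marg p {j, k} x * marg p (Finset.Iic j) x

def IsCML {d N : ℕ} (p : (Fin (N + 1) → (Fin d → ℝ)) → ℝ) : Prop :=
  ∀ j k : Fin (N + 1), j < k → k < Fin.last N → ∀ x,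
    marg p (insert k (insert (Fin.last N) (Finset.Iic j))) x * marg p {j, Fin.last N} x
      = marg p {j, k, Fin.last N} x * marg p (insert (Fin.last N) (Finset.Iic j)) x

/-- Joint density of the Gaussian Markov model \$x_0 = e_0\$, \$x_k = M_{k,k-1}x_{k-1} + e_k\$
with \$e_k ∼ N(0, M_k)\$ (where \$F k = M_{k,k-1}\$). -/
noncomputable def markovDensity {d N : ℕ} (F M : ℕ → Matrix (Fin d) (Fin d) ℝ)
    (x : Fin (N + 1) → (Fin d → ℝ)) : ℝ :=
  gaussianPDF 0 (M 0) (x 0) *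
    ∏ k : Fin N, gaussianPDF ((F (k.val + 1)) *ᵥ x k.castSucc) (M (k.val + 1)) (x k.succ)

/-- Joint density of the \$CM_L\$ model \$x_N = e_N\$, \$x_0 = G_{0,N}x_N + e_0\$,
\$x_k = G_{k,k-1}x_{k-1} + G_{k,N}x_N + e_k\$, with white Gaussian noise
\$e_N ∼ N(0, G_N)\$, \$e_0 ∼ N(0, G_0)\$, \$e_k ∼ N(0, G_k)\$. -/
noncomputable def cmlDensity {d N : ℕ} (G0N : Matrix (Fin d) (Fin d) ℝ)
    (Gkk1 GkN : ℕ → Matrix (Fin d) (Fin d) ℝ)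
    (Gc0 GcN : Matrix (Fin d) (Fin d) ℝ) (Gc : ℕ → Matrix (Fin d) (Fin d) ℝ)
    (x : Fin (N + 1) → (Fin d → ℝ)) : ℝ :=
  gaussianPDF 0 GcN (x (Fin.last N)) *
    gaussianPDF (G0N *ᵥ x (Fin.last N)) Gc0 (x 0) *
    ∏ j : Fin (N - 1),
      gaussianPDF
        (Gkk1 (j.val + 1) *ᵥ x ⟨j.val, by have := j.isLt; omega⟩
          + GkN (j.val + 1) *ᵥ x (Fin.last N))
        (Gc (j.val + 1)) (x ⟨j.val + 1, by have := j.isLt; omega⟩)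


lemma marg_pullout {d N : ℕ} (p q : (Fin (N + 1) → (Fin d → ℝ)) → ℝ)
    (S : Finset (Fin (N + 1)))
    (hp : ∀ y z, (∀ i ∈ S, y i = z i) → p y = p z)
    (x : Fin (N + 1) → (Fin d → ℝ)) :
    marg (fun t => p t * q t) S x = p x * marg q S x := by
  unfold marg
  rw [← MeasureTheory.integral_const_mul]
  congr 1
  funext y
  show p _ * q _ = p x * q _
  congr 1
  exact hp _ _ fun i hi => dif_pos hi

lemma marg_split {d N : ℕ} (p q : (Fin (N + 1) → (Fin d → ℝ)) → ℝ)
    (S A : Finset (Fin (N + 1)))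
    (hp : ∀ y z, (∀ i ∈ S ∪ A, y i = z i) → p y = p z)
    (hq : ∀ y z, (∀ i ∈ S ∪ (S ∪ A)ᶜ, y i = z i) → q y = q z)
    (x : Fin (N + 1) → (Fin d → ℝ)) :
    marg (fun t => p t * q t) S x
      = marg p (S ∪ (S ∪ A)ᶜ) x * marg q (S ∪ A) x := by
  classical
  have hB : ∀ i : Fin (N + 1), i ∉ S ∪ (S ∪ A)ᶜ ↔ (i ∉ S ∧ i ∈ A) := by
    intro i; by_cases h1 : i ∈ S <;> by_cases h2 : i ∈ A <;> simp [h1, h2]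
  have hA' : ∀ i : Fin (N + 1), i ∉ S ∪ A ↔ (i ∉ S ∧ i ∉ A) := by
    intro i; by_cases h1 : i ∈ S <;> by_cases h2 : i ∈ A <;> simp [h1, h2]
  let κ : {i : Fin (N + 1) // i ∉ S} → Prop := fun i => i.1 ∈ A
  let ε₁ : {i : {i : Fin (N + 1) // i ∉ S} // κ i} ≃ {i : Fin (N + 1) // i ∉ S ∪ (S ∪ A)ᶜ} :=
    { toFun := fun i => ⟨i.1.1, (hB _).2 ⟨i.1.2, i.2⟩⟩
      invFun := fun i => ⟨⟨i.1, ((hB _).1 i.2).1⟩, ((hB _).1 i.2).2⟩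
      left_inv := fun i => rfl
      right_inv := fun i => rfl }
  let ε₂ : {i : {i : Fin (N + 1) // i ∉ S} // ¬ κ i} ≃ {i : Fin (N + 1) // i ∉ S ∪ A} :=
    { toFun := fun i => ⟨i.1.1, (hA' _).2 ⟨i.1.2, i.2⟩⟩
      invFun := fun i => ⟨⟨i.1, ((hA' _).1 i.2).1⟩, ((hA' _).1 i.2).2⟩
      left_inv := fun i => rfl
      right_inv := fun i => rfl }
  let p' : ({i : {i : Fin (N + 1) // i ∉ S} // κ i} → (Fin d → ℝ)) → ℝ := fun a =>
    p (fun i => if h : i ∈ S then x i else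
        if hA : κ (⟨i, h⟩ : {i : Fin (N + 1) // i ∉ S}) then a ⟨⟨i, h⟩, hA⟩ else x i)
  let q' : ({i : {i : Fin (N + 1) // i ∉ S} // ¬ κ i} → (Fin d → ℝ)) → ℝ := fun b =>
    q (fun i => if h : i ∈ S then x i else
        if hA : κ (⟨i, h⟩ : {i : Fin (N + 1) // i ∉ S}) then x i else b ⟨⟨i, h⟩, hA⟩)
  have step1 : marg (fun t => p t * q t) S x
      = ∫ z : ({i : {i : Fin (N + 1) // i ∉ S} // κ i} → (Fin d → ℝ))
          × ({i : {i : Fin (N + 1) // i ∉ S} // ¬ κ i} → (Fin d → ℝ)), p' z.1 * q' z.2 := by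
    unfold marg
    rw [← (((volume_preserving_piEquivPiSubtypeProd
        (fun _ : {i : Fin (N + 1) // i ∉ S} => (Fin d → ℝ)) κ)).symm
      (MeasurableEquiv.piEquivPiSubtypeProd
        (fun _ : {i : Fin (N + 1) // i ∉ S} => (Fin d → ℝ)) κ)).integral_comp']
    congr 1
    funext z
    show p _ * q _ = p' z.1 * q' z.2
    have hsymm : ∀ (i : {i : Fin (N + 1) // i ∉ S}),
        (MeasurableEquiv.piEquivPiSubtypeProd
          (fun _ : {i : Fin (N + 1) // i ∉ S} => (Fin d → ℝ)) κ).symm z i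
          = if h : κ i then z.1 ⟨i, h⟩ else z.2 ⟨i, h⟩ := fun i => rfl
    congr 1
    · refine hp _ _ fun i hi => ?_
      by_cases hS : i ∈ S
      · simp only [dif_pos hS]
      · have hiA : κ (⟨i, hS⟩ : {i : Fin (N + 1) // i ∉ S}) := by
          rcases Finset.mem_union.1 hi with h | h
          · exact absurd h hS
          · exact h
        simp only [dif_neg hS, hsymm, dif_pos hiA]
    · refine hq _ _ fun i hi => ?_
      by_cases hS : i ∈ S
      · simp only [dif_pos hS]
      · have hiA : ¬ κ (⟨i, hS⟩ : {i : Fin (N + 1) // i ∉ S}) := by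
          intro hk
          have : i ∉ S ∪ (S ∪ A)ᶜ := (hB i).2 ⟨hS, hk⟩
          exact this hi
        simp only [dif_neg hS, hsymm, dif_neg hiA]
  have step2 : (∫ z : ({i : {i : Fin (N + 1) // i ∉ S} // κ i} → (Fin d → ℝ))
          × ({i : {i : Fin (N + 1) // i ∉ S} // ¬ κ i} → (Fin d → ℝ)), p' z.1 * q' z.2)
      = (∫ a, p' a) * (∫ b, q' b) := by
    rw [MeasureTheory.Measure.volume_eq_prod, MeasureTheory.integral_prod_mul]
  have step3 : (∫ a, p' a) = marg p (S ∪ (S ∪ A)ᶜ) x := by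
    unfold marg
    rw [← ((MeasureTheory.volume_measurePreserving_piCongrLeft (fun _ => (Fin d → ℝ)) ε₁).symm
      (MeasurableEquiv.piCongrLeft (fun _ => (Fin d → ℝ)) ε₁)).integral_comp']
    congr 1
    funext y
    show p' _ = p _
    refine hp _ _ fun i hi => ?_
    by_cases hS : i ∈ S
    · have hm : i ∈ S ∪ (S ∪ A)ᶜ := Finset.mem_union_left _ hS
      simp only [dif_pos hS, dif_pos hm]
    · have hiA : κ (⟨i, hS⟩ : {i : Fin (N + 1) // i ∉ S}) := by
        rcases Finset.mem_union.1 hi with h | h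
        · exact absurd h hS
        · exact h
      have hnB : i ∉ S ∪ (S ∪ A)ᶜ := (hB i).2 ⟨hS, hiA⟩
      simp only [dif_neg hS, dif_pos hiA, dif_neg hnB]
      show ((MeasurableEquiv.piCongrLeft (fun _ => (Fin d → ℝ)) ε₁).symm y) _ = _
      rfl
  have step4 : (∫ b, q' b) = marg q (S ∪ A) x := by
    unfold marg
    rw [← ((MeasureTheory.volume_measurePreserving_piCongrLeft (fun _ => (Fin d → ℝ)) ε₂).symm
      (MeasurableEquiv.piCongrLeft (fun _ => (Fin d → ℝ)) ε₂)).integral_comp']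
    congr 1
    funext y
    show q' _ = q _
    refine hq _ _ fun i hi => ?_
    by_cases hS : i ∈ S
    · have hm : i ∈ S ∪ A := Finset.mem_union_left _ hS
      simp only [dif_pos hS, dif_pos hm]
    · have hc : i ∈ (S ∪ A)ᶜ := by
        rcases Finset.mem_union.1 hi with h | h
        · exact absurd h hS
        · exact h
      have hiA : ¬ κ (⟨i, hS⟩ : {i : Fin (N + 1) // i ∉ S}) := fun hk =>
        (Finset.mem_compl.1 hc) (Finset.mem_union_right _ hk)
      have hm : i ∉ S ∪ A := (hA' i).2 ⟨hS, hiA⟩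
      simp only [dif_neg hS, dif_neg hiA, dif_neg hm]
      show ((MeasurableEquiv.piCongrLeft (fun _ => (Fin d → ℝ)) ε₂).symm y) _ = _
      rfl
  rw [step1, step2, step3, step4]

noncomputable def cmlTerm {d N : ℕ} (Gkk1 GkN Gc : ℕ → Matrix (Fin d) (Fin d) ℝ)
    (y : Fin (N + 1) → (Fin d → ℝ)) (i : Fin (N - 1)) : ℝ :=
  gaussianPDF
    (Gkk1 (i.val + 1) *ᵥ y ⟨i.val, by have := i.isLt; omega⟩
      + GkN (i.val + 1) *ᵥ y (Fin.last N))
    (Gc (i.val + 1)) (y ⟨i.val + 1, by have := i.isLt; omega⟩)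

noncomputable def cmlF {d N : ℕ} (G0N : Matrix (Fin d) (Fin d) ℝ)
    (Gkk1 GkN : ℕ → Matrix (Fin d) (Fin d) ℝ)
    (Gc0 GcN : Matrix (Fin d) (Fin d) ℝ) (Gc : ℕ → Matrix (Fin d) (Fin d) ℝ)
    (j : Fin (N + 1)) (y : Fin (N + 1) → (Fin d → ℝ)) : ℝ :=
  gaussianPDF 0 GcN (y (Fin.last N)) *
    gaussianPDF (G0N *ᵥ y (Fin.last N)) Gc0 (y 0) *
    ∏ i ∈ Finset.univ.filter (fun i : Fin (N - 1) => i.val + 1 ≤ j.val),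
      cmlTerm Gkk1 GkN Gc y i

noncomputable def cmlG {d N : ℕ} (Gkk1 GkN Gc : ℕ → Matrix (Fin d) (Fin d) ℝ)
    (j : Fin (N + 1)) (y : Fin (N + 1) → (Fin d → ℝ)) : ℝ :=
  ∏ i ∈ Finset.univ.filter (fun i : Fin (N - 1) => ¬ (i.val + 1 ≤ j.val)),
    cmlTerm Gkk1 GkN Gc y i

lemma cml_factor {d N : ℕ} (G0N : Matrix (Fin d) (Fin d) ℝ)
    (Gkk1 GkN : ℕ → Matrix (Fin d) (Fin d) ℝ)
    (Gc0 GcN : Matrix (Fin d) (Fin d) ℝ) (Gc : ℕ → Matrix (Fin d) (Fin d) ℝ)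
    (j : Fin (N + 1)) (y : Fin (N + 1) → (Fin d → ℝ)) :
    cmlDensity (N := N) G0N Gkk1 GkN Gc0 GcN Gc y
      = cmlF G0N Gkk1 GkN Gc0 GcN Gc j y * cmlG Gkk1 GkN Gc j y := by
  unfold cmlDensity cmlF cmlG cmlTerm
  rw [← Finset.prod_filter_mul_prod_filter_not Finset.univ
    (fun i : Fin (N - 1) => i.val + 1 ≤ j.val), ← mul_assoc]

lemma cmlF_det {d N : ℕ} (G0N : Matrix (Fin d) (Fin d) ℝ)
    (Gkk1 GkN : ℕ → Matrix (Fin d) (Fin d) ℝ)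
    (Gc0 GcN : Matrix (Fin d) (Fin d) ℝ) (Gc : ℕ → Matrix (Fin d) (Fin d) ℝ)
    (j : Fin (N + 1)) (y z : Fin (N + 1) → (Fin d → ℝ))
    (h : ∀ i ∈ insert (Fin.last N) (Finset.Iic j), y i = z i) :
    cmlF G0N Gkk1 GkN Gc0 GcN Gc j y = cmlF G0N Gkk1 GkN Gc0 GcN Gc j z := by
  have hlast : y (Fin.last N) = z (Fin.last N) := h _ (Finset.mem_insert_self _ _)
  have h0 : y 0 = z 0 := h 0 (Finset.mem_insert_of_mem (Finset.mem_Iic.mpr (Fin.zero_le j)))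
  unfold cmlF
  rw [hlast, h0]
  congr 1
  apply Finset.prod_congr rfl
  intro i hi
  simp only [Finset.mem_filter] at hi
  unfold cmlTerm
  rw [hlast, h ⟨i.val, by have := i.isLt; omega⟩ (Finset.mem_insert_of_mem
      (Finset.mem_Iic.mpr (by simp [Fin.le_def]; omega))),
    h ⟨i.val + 1, by have := i.isLt; omega⟩ (Finset.mem_insert_of_mem
      (Finset.mem_Iic.mpr (by simp [Fin.le_def]; omega)))]

lemma cmlG_det {d N : ℕ} (Gkk1 GkN Gc : ℕ → Matrix (Fin d) (Fin d) ℝ)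
    (j : Fin (N + 1)) (y z : Fin (N + 1) → (Fin d → ℝ))
    (h : ∀ i ∈ insert (Fin.last N) (Finset.Ico j (Fin.last N)), y i = z i) :
    cmlG Gkk1 GkN Gc j y = cmlG Gkk1 GkN Gc j z := by
  have hlast : y (Fin.last N) = z (Fin.last N) := h _ (Finset.mem_insert_self _ _)
  unfold cmlG
  apply Finset.prod_congr rfl
  intro i hi
  simp only [Finset.mem_filter] at hi
  have hji : j.val ≤ i.val := by omega
  unfold cmlTerm
  rw [hlast, h ⟨i.val, by have := i.isLt; omega⟩ (Finset.mem_insert_of_mem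
      (Finset.mem_Ico.mpr ⟨by simp [Fin.le_def, hji],
        by simp [Fin.lt_def]; have := i.isLt; omega⟩)),
    h ⟨i.val + 1, by have := i.isLt; omega⟩ (Finset.mem_insert_of_mem
      (Finset.mem_Ico.mpr ⟨by simp [Fin.le_def]; omega,
        by simp [Fin.lt_def]; have := i.isLt; omega⟩))]

/-- Any sequence generated by the $CM_L$ model (with independent zero-mean Gaussian
noises of positive definite covariances) is $CM_L$: conditioned on $x_N$,
$[x_k]_0^{N-1}$ is Markov. -/
theorem cml_model_is_CML {d N : ℕ} (G0N : Matrix (Fin d) (Fin d) ℝ)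
    (Gkk1 GkN : ℕ → Matrix (Fin d) (Fin d) ℝ)
    (Gc0 GcN : Matrix (Fin d) (Fin d) ℝ) (Gc : ℕ → Matrix (Fin d) (Fin d) ℝ)
    (hGc0 : Gc0.PosDef) (hGcN : GcN.PosDef) (hGc : ∀ k, (Gc k).PosDef) :
    IsCML (cmlDensity (N := N) G0N Gkk1 GkN Gc0 GcN Gc) := by
  intro j k hjk hk x
  have hjkv : (j : ℕ) < (k : ℕ) := hjk
  have hkv : (k : ℕ) < N := hk
  have hfg : cmlDensity (N := N) G0N Gkk1 GkN Gc0 GcN Gc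
      = fun t => cmlF G0N Gkk1 GkN Gc0 GcN Gc j t * cmlG Gkk1 GkN Gc j t :=
    funext (cml_factor G0N Gkk1 GkN Gc0 GcN Gc j)
  rw [hfg]
  have e1 : ({j, k, Fin.last N} : Finset (Fin (N + 1))) ∪ Finset.Iio j
      = insert k (insert (Fin.last N) (Finset.Iic j)) := by
    ext i
    have hiv := i.isLt
    simp only [Finset.mem_union, Finset.mem_insert, Finset.mem_Iio, Finset.mem_Iic,
      Finset.mem_singleton, Fin.ext_iff, Fin.lt_def, Fin.le_def, Fin.val_last]
    omega
  have e2 : (({j, k, Fin.last N} : Finset (Fin (N + 1)))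
        ∪ (({j, k, Fin.last N} : Finset (Fin (N + 1))) ∪ Finset.Iio j)ᶜ)
      = insert (Fin.last N) (Finset.Ico j (Fin.last N)) := by
    ext i
    have hiv := i.isLt
    simp only [Finset.mem_union, Finset.mem_insert, Finset.mem_Iio, Finset.mem_Ico,
      Finset.mem_compl, Finset.mem_singleton, Fin.ext_iff, Fin.lt_def, Fin.le_def,
      Fin.val_last, not_or]
    omega
  have e3 : ({j, Fin.last N} : Finset (Fin (N + 1))) ∪ Finset.Iio j
      = insert (Fin.last N) (Finset.Iic j) := by
    ext i
    have hiv := i.isLt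
    simp only [Finset.mem_union, Finset.mem_insert, Finset.mem_Iio, Finset.mem_Iic,
      Finset.mem_singleton, Fin.ext_iff, Fin.lt_def, Fin.le_def, Fin.val_last]
    omega
  have e4 : (({j, Fin.last N} : Finset (Fin (N + 1)))
        ∪ (({j, Fin.last N} : Finset (Fin (N + 1))) ∪ Finset.Iio j)ᶜ)
      = insert (Fin.last N) (Finset.Ico j (Fin.last N)) := by
    ext i
    have hiv := i.isLt
    simp only [Finset.mem_union, Finset.mem_insert, Finset.mem_Iio, Finset.mem_Ico,
      Finset.mem_compl, Finset.mem_singleton, Fin.ext_iff, Fin.lt_def, Fin.le_def,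
      Fin.val_last, not_or]
    omega
  have hsub : insert (Fin.last N) (Finset.Iic j)
      ⊆ insert k (insert (Fin.last N) (Finset.Iic j)) := Finset.subset_insert _ _
  have m1 := marg_pullout (cmlF G0N Gkk1 GkN Gc0 GcN Gc j) (cmlG Gkk1 GkN Gc j)
    (insert k (insert (Fin.last N) (Finset.Iic j)))
    (fun y z h => cmlF_det G0N Gkk1 GkN Gc0 GcN Gc j y z (fun i hi => h i (hsub hi))) x
  have m4 := marg_pullout (cmlF G0N Gkk1 GkN Gc0 GcN Gc j) (cmlG Gkk1 GkN Gc j)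
    (insert (Fin.last N) (Finset.Iic j))
    (fun y z h => cmlF_det G0N Gkk1 GkN Gc0 GcN Gc j y z h) x
  have m3 := marg_split (cmlF G0N Gkk1 GkN Gc0 GcN Gc j) (cmlG Gkk1 GkN Gc j)
    {j, k, Fin.last N} (Finset.Iio j)
    (fun y z h => cmlF_det G0N Gkk1 GkN Gc0 GcN Gc j y z
      (fun i hi => h i (by rw [e1]; exact hsub hi)))
    (fun y z h => cmlG_det Gkk1 GkN Gc j y z (fun i hi => h i (by rw [e2]; exact hi))) x
  rw [e2, e1] at m3
  have m2 := marg_split (cmlF G0N Gkk1 GkN Gc0 GcN Gc j) (cmlG Gkk1 GkN Gc j)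
    {j, Fin.last N} (Finset.Iio j)
    (fun y z h => cmlF_det G0N Gkk1 GkN Gc0 GcN Gc j y z
      (fun i hi => h i (by rw [e3]; exact hi)))
    (fun y z h => cmlG_det Gkk1 GkN Gc j y z (fun i hi => h i (by rw [e4]; exact hi))) x
  rw [e4, e3] at m2
  rw [m1, m2, m3, m4]
  ring
end

section
/- Let a zero-mean nonsingular Gaussian sequence obey the $CM_L$ model $x_k = G_{k,k-1}x_{k-1} + G_{k,N}x_N + e_k$ ($k\in[1,N-1]$), $x_N = e_N$, $x_0 = G_{0,N}x_N + e_0$ with white Gaussian noise of positive definite covariances $G_k$. If the parameters satisfy $G_k^{-1} G_{k,N} = G_{k+1,k}' G_{k+1}^{-1} G_{k+1,N}$ for all $k \in [1,N-2]$ and additionally $G_0^{-1} G_{0,N} = G_{1,0}' G_1^{-1} G_{1,N}$, then the sequence is Markov. -/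
open MeasureTheory ProbabilityTheory Matrix

lemma integral_pi_reindex {ι ι' : Type*} [Fintype ι] [Fintype ι'] (e : ι' ≃ ι)
    (g : (ι' → (Fin d → ℝ)) → ℝ) :
    ∫ z : ι' → (Fin d → ℝ), g z = ∫ w : ι → (Fin d → ℝ), g (fun i' => w (e i')) := by
  have h := (MeasureTheory.volume_measurePreserving_piCongrLeft (fun _ : ι => (Fin d → ℝ)) e).symm
  have := h.integral_comp (MeasurableEquiv.piCongrLeft (fun _ : ι => (Fin d → ℝ)) e).symm.measurableEmbedding g
  rw [← this]
  rfl

lemma integral_pi_split {ι : Type*} [Fintype ι] (q : ι → Prop) [DecidablePred q]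
    (F : ({i // q i} → (Fin d → ℝ)) → ℝ) (G : ({i // ¬ q i} → (Fin d → ℝ)) → ℝ) :
    ∫ y : ι → (Fin d → ℝ), F (fun i => y i.1) * G (fun i => y i.1)
      = (∫ u, F u) * (∫ v, G v) := by
  have h := MeasureTheory.volume_preserving_piEquivPiSubtypeProd (fun _ : ι => (Fin d → ℝ)) q
  have h2 := h.integral_comp (MeasurableEquiv.piEquivPiSubtypeProd (fun _ : ι => (Fin d → ℝ)) q).measurableEmbedding
    (fun z : ({i // q i} → (Fin d → ℝ)) × ({i // ¬ q i} → (Fin d → ℝ)) => F z.1 * G z.2)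
  rw [show (∫ y : ι → (Fin d → ℝ), F (fun i => y i.1) * G (fun i => y i.1)) =
    ∫ y : ι → (Fin d → ℝ), (fun z : ({i // q i} → (Fin d → ℝ)) × ({i // ¬ q i} → (Fin d → ℝ)) => F z.1 * G z.2)
      ((MeasurableEquiv.piEquivPiSubtypeProd (fun _ : ι => (Fin d → ℝ)) q) y) from rfl, h2]
  exact integral_prod_mul F G

lemma marg_const_mul {d N : ℕ} (A B : (Fin (N + 1) → (Fin d → ℝ)) → ℝ)
    (S : Finset (Fin (N + 1))) (x : Fin (N + 1) → (Fin d → ℝ))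
    (hA : ∀ z w, (∀ i ∈ S, z i = w i) → A z = A w) :
    marg (fun z => A z * B z) S x = A x * marg B S x := by
  unfold marg
  rw [← integral_const_mul]
  congr 1; funext y
  show A _ * B _ = A x * B _
  congr 1
  exact hA _ _ (fun i hi => by simp [hi])

lemma marg_mul {d N : ℕ} (A B : (Fin (N + 1) → (Fin d → ℝ)) → ℝ)
    (S U : Finset (Fin (N + 1))) (x : Fin (N + 1) → (Fin d → ℝ))
    (hU : ∀ i ∈ U, i ∉ S)
    (hA : ∀ z w, (∀ i ∉ U, z i = w i) → A z = A w)
    (hB : ∀ z w, (∀ i ∈ S ∪ U, z i = w i) → B z = B w) :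
    marg (fun z => A z * B z) S x = marg A (S ∪ U) x * marg B Uᶜ x := by
  classical
  unfold marg
  set F : ({i : {i : Fin (N+1) // i ∉ S} // ¬ (i.1 ∈ U)} → (Fin d → ℝ)) → ℝ :=
    fun u => A (fun i => if h : i ∈ S ∪ U then x i else
      u ⟨⟨i, fun hS => h (Finset.mem_union_left _ hS)⟩,
         fun hU' => h (Finset.mem_union_right _ hU')⟩) with hF
  set G : ({i : {i : Fin (N+1) // i ∉ S} // (i.1 ∈ U)} → (Fin d → ℝ)) → ℝ :=
    fun v => B (fun i => if h : i ∈ Uᶜ then x i else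
      v ⟨⟨i, hU i (by simpa using h)⟩, by simpa using h⟩) with hG
  have key : ∀ y : {i : Fin (N+1) // i ∉ S} → (Fin d → ℝ),
      A (fun i => if h : i ∈ S then x i else y ⟨i, h⟩) *
      B (fun i => if h : i ∈ S then x i else y ⟨i, h⟩)
      = G (fun i => y i.1) * F (fun i => y i.1) := by
    intro y
    have h1 : A (fun i => if h : i ∈ S then x i else y ⟨i, h⟩) = F (fun i => y i.1) := by
      apply hA
      intro i hiU
      by_cases hiS : i ∈ S
      · simp [hiS, Finset.mem_union, hiU, hiS]
      · have : ¬ (i ∈ S ∪ U) := by simp [hiS, hiU]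
        simp [hiS, this]
    have h2 : B (fun i => if h : i ∈ S then x i else y ⟨i, h⟩) = G (fun i => y i.1) := by
      apply hB
      intro i hi
      rcases Finset.mem_union.mp hi with hiS | hiU
      · have : i ∈ Uᶜ := Finset.mem_compl.mpr (fun h => hU i h hiS)
        simp [hiS, this]
      · have hh1 : i ∉ S := hU i hiU
        have hh2 : i ∉ Uᶜ := by simpa using hiU
        simp [hh1, hh2]
    rw [h1, h2, mul_comm]
  calc ∫ y : {i : Fin (N+1) // i ∉ S} → (Fin d → ℝ),
        A (fun i => if h : i ∈ S then x i else y ⟨i, h⟩) *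
        B (fun i => if h : i ∈ S then x i else y ⟨i, h⟩)
      = ∫ y : {i : Fin (N+1) // i ∉ S} → (Fin d → ℝ), G (fun i => y i.1) * F (fun i => y i.1) := by
        congr 1; funext y; exact key y
    _ = (∫ v, G v) * (∫ u, F u) := integral_pi_split (fun i : {i : Fin (N+1) // i ∉ S} => i.1 ∈ U) G F
    _ = (∫ u, F u) * (∫ v, G v) := mul_comm _ _
    _ = _ := by
        congr 1
        · rw [integral_pi_reindex
            (⟨fun i => ⟨i.1.1, fun h => ((Finset.mem_union.mp h).elim i.1.2 i.2)⟩,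
              fun i => ⟨⟨i.1, fun hS => i.2 (Finset.mem_union_left _ hS)⟩, fun hU' => i.2 (Finset.mem_union_right _ hU')⟩,
              fun i => rfl, fun i => rfl⟩ :
              {i : {i : Fin (N+1) // i ∉ S} // ¬ (i.1 ∈ U)} ≃ {i : Fin (N+1) // i ∉ S ∪ U}) F]
          rfl
        · rw [integral_pi_reindex
            (⟨fun i => ⟨i.1.1, by simpa using i.2⟩,
              fun i => ⟨⟨i.1, hU i.1 (by simpa using i.2)⟩, by simpa using i.2⟩,
              fun i => rfl, fun i => rfl⟩ :
              {i : {i : Fin (N+1) // i ∉ S} // (i.1 ∈ U)} ≃ {i : Fin (N+1) // i ∉ Uᶜ}) G]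
          rfl

lemma isMarkov_chain {d M : ℕ} (f : ℕ → (Fin d → ℝ) → (Fin d → ℝ) → ℝ)
    (p : (Fin (M + 2) → (Fin d → ℝ)) → ℝ)
    (hp : ∀ x, p x = ∏ i : Fin (M + 1), f i.val (x i.castSucc) (x i.succ)) :
    IsMarkov (N := M + 1) p := by
  classical
  intro j k hjk x
  have hjk' : j.val < k.val := hjk
  have hk2 : k.val < M + 2 := k.isLt
  set P : (Fin (M + 2) → (Fin d → ℝ)) → ℝ := fun z =>
    ∏ i ∈ Finset.univ.filter (fun i : Fin (M + 1) => i.val < j.val),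
      f i.val (z i.castSucc) (z i.succ) with hPdef
  set C : (Fin (M + 2) → (Fin d → ℝ)) → ℝ := fun z =>
    ∏ i ∈ Finset.univ.filter (fun i : Fin (M + 1) => ¬ i.val < j.val ∧ i.val < k.val),
      f i.val (z i.castSucc) (z i.succ) with hCdef
  set T : (Fin (M + 2) → (Fin d → ℝ)) → ℝ := fun z =>
    ∏ i ∈ Finset.univ.filter (fun i : Fin (M + 1) => ¬ i.val < j.val ∧ ¬ i.val < k.val),
      f i.val (z i.castSucc) (z i.succ) with hTdef
  have hpe : p = fun z => P z * (C z * T z) := by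
    funext z
    rw [hp z, hPdef]
    simp only
    rw [← Finset.prod_filter_mul_prod_filter_not Finset.univ
      (fun i : Fin (M + 1) => i.val < j.val)]
    congr 1
    rw [← Finset.prod_filter_mul_prod_filter_not
      (Finset.univ.filter (fun i : Fin (M + 1) => ¬ i.val < j.val))
      (fun i : Fin (M + 1) => i.val < k.val)]
    rw [Finset.filter_filter, Finset.filter_filter]
  -- dependence helpers
  have depP : ∀ (s : Finset (Fin (M + 2))), (∀ i : Fin (M + 2), i.val ≤ j.val → i ∈ s) →
      ∀ z w, (∀ i ∈ s, z i = w i) → P z = P w := by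
    intro s hs z w hzw
    refine Finset.prod_congr rfl ?_
    intro i hi
    simp only [Finset.mem_filter, Finset.mem_univ, true_and] at hi
    rw [hzw _ (hs _ (by simp only [Fin.coe_castSucc]; omega)),
        hzw _ (hs _ (by simp only [Fin.val_succ]; omega))]
  have depC : ∀ (s : Finset (Fin (M + 2))),
      (∀ i : Fin (M + 2), j.val ≤ i.val → i.val ≤ k.val → i ∈ s) →
      ∀ z w, (∀ i ∈ s, z i = w i) → C z = C w := by
    intro s hs z w hzw
    refine Finset.prod_congr rfl ?_
    intro i hi
    simp only [Finset.mem_filter, Finset.mem_univ, true_and] at hi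
    rw [hzw _ (hs _ (by simp only [Fin.coe_castSucc]; omega) (by simp only [Fin.coe_castSucc]; omega)),
        hzw _ (hs _ (by simp only [Fin.val_succ]; omega) (by simp only [Fin.val_succ]; omega))]
  have depT : ∀ (s : Finset (Fin (M + 2))), (∀ i : Fin (M + 2), k.val ≤ i.val → i ∈ s) →
      ∀ z w, (∀ i ∈ s, z i = w i) → T z = T w := by
    intro s hs z w hzw
    refine Finset.prod_congr rfl ?_
    intro i hi
    simp only [Finset.mem_filter, Finset.mem_univ, true_and] at hi
    rw [hzw _ (hs _ (by simp only [Fin.coe_castSucc]; omega)),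
        hzw _ (hs _ (by simp only [Fin.val_succ]; omega))]
  set PC : (Fin (M + 2) → (Fin d → ℝ)) → ℝ := fun z => P z * C z with hPC
  set CT : (Fin (M + 2) → (Fin d → ℝ)) → ℝ := fun z => C z * T z with hCT
  have hp1 : p = fun z => PC z * T z := by
    funext z; rw [hpe]; simp only [hPC]; ring
  have hp2 : p = fun z => P z * CT z := by
    funext z; rw [hpe]
  -- finset identities
  have e1 : insert k (Finset.Iic j) ∪ Finset.Ioi k = Finset.Iic j ∪ Finset.Ici k := by
    ext i
    simp only [Finset.mem_union, Finset.mem_insert, Finset.mem_Iic, Finset.mem_Ioi,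
      Finset.mem_Ici, Fin.le_def, Fin.lt_def, Fin.ext_iff]
    omega
  have e2 : (Finset.Ioi k : Finset (Fin (M + 2)))ᶜ = Finset.Iic k := by
    ext i
    simp only [Finset.mem_compl, Finset.mem_Ioi, Finset.mem_Iic, Fin.le_def, Fin.lt_def]
    omega
  have e3 : ({j} : Finset (Fin (M + 2))) ∪ Finset.Ioi j = Finset.Ici j := by
    ext i
    simp only [Finset.mem_union, Finset.mem_singleton, Finset.mem_Ioi, Finset.mem_Ici,
      Fin.le_def, Fin.lt_def, Fin.ext_iff]
    omega
  have e4 : (Finset.Ioi j : Finset (Fin (M + 2)))ᶜ = Finset.Iic j := by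
    ext i
    simp only [Finset.mem_compl, Finset.mem_Ioi, Finset.mem_Iic, Fin.le_def, Fin.lt_def]
    omega
  have e5 : ({j, k} : Finset (Fin (M + 2))) ∪ (Finset.Ioi j \ {k}) = Finset.Ici j := by
    ext i
    simp only [Finset.mem_union, Finset.mem_insert, Finset.mem_singleton, Finset.mem_sdiff,
      Finset.mem_Ioi, Finset.mem_Ici, Fin.le_def, Fin.lt_def, Fin.ext_iff]
    omega
  have e6 : ((Finset.Ioi j \ {k})ᶜ : Finset (Fin (M + 2))) = Finset.Iic j ∪ {k} := by
    ext i
    simp only [Finset.mem_compl, Finset.mem_sdiff, Finset.mem_union, Finset.mem_singleton,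
      Finset.mem_Ioi, Finset.mem_Iic, Fin.le_def, Fin.lt_def, Fin.ext_iff]
    omega
  have e7 : (Finset.Iic j ∪ {k}) ∪ Finset.Ioi k = Finset.Iic j ∪ Finset.Ici k := by
    ext i
    simp only [Finset.mem_union, Finset.mem_singleton, Finset.mem_Ioi, Finset.mem_Iic,
      Finset.mem_Ici, Fin.le_def, Fin.lt_def, Fin.ext_iff]
    omega
  -- M1
  have hM1 : marg p (insert k (Finset.Iic j)) x
      = (P x * marg C (Finset.Iic j ∪ Finset.Ici k) x) * marg T (Finset.Iic k) x := by
    rw [hp1]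
    rw [marg_mul PC T (insert k (Finset.Iic j)) (Finset.Ioi k) x
      (by intro i hi
          simp only [Finset.mem_Ioi, Finset.mem_insert, Finset.mem_Iic, Fin.le_def,
            Fin.lt_def, Fin.ext_iff] at *
          omega)
      (by intro z w h
          have h' : ∀ i ∈ (Finset.Iic k : Finset (Fin (M + 2))), z i = w i := by
            intro i hi
            refine h i ?_
            simp only [Finset.mem_Iic, Fin.le_def] at hi
            simp only [Finset.mem_Ioi, Fin.lt_def]
            omega
          simp only [hPC]
          rw [depP (Finset.Iic k) (by intro i hi; simp only [Finset.mem_Iic, Fin.le_def]; omega) z w h',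
              depC (Finset.Iic k) (by intro i h1 h2; simp only [Finset.mem_Iic, Fin.le_def]; omega) z w h'])
      (depT _ (by intro i hi
                  simp only [Finset.mem_union, Finset.mem_insert, Finset.mem_Iic, Finset.mem_Ioi,
                    Fin.le_def, Fin.lt_def, Fin.ext_iff]
                  omega))]
    rw [e1, e2, hPC]
    rw [marg_const_mul P C (Finset.Iic j ∪ Finset.Ici k) x
      (depP _ (by intro i hi
                  simp only [Finset.mem_union, Finset.mem_Iic, Finset.mem_Ici, Fin.le_def]
                  omega))]
  -- M2
  have hM2 : marg p {j} x = marg P (Finset.Ici j) x * marg CT (Finset.Iic j) x := by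
    rw [hp2]
    rw [marg_mul P CT ({j} : Finset (Fin (M + 2))) (Finset.Ioi j) x
      (by intro i hi
          simp only [Finset.mem_Ioi, Finset.mem_singleton, Fin.lt_def, Fin.ext_iff] at *
          omega)
      (by intro z w h
          exact depP (Finset.Ioi j)ᶜ
            (by intro i hi
                simp only [Finset.mem_compl, Finset.mem_Ioi, Fin.lt_def]
                omega) z w (fun i hi => h i (Finset.mem_compl.mp hi)))
      (by intro z w h
          simp only [hCT]
          have hs : ∀ i : Fin (M + 2), j.val ≤ i.val →
              i ∈ ({j} : Finset (Fin (M + 2))) ∪ Finset.Ioi j := by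
            intro i hi
            simp only [Finset.mem_union, Finset.mem_singleton, Finset.mem_Ioi, Fin.lt_def,
              Fin.ext_iff]
            omega
          rw [depC _ (fun i h1 _ => hs i h1) z w h, depT _ (fun i h1 => hs i (by omega)) z w h])]
    rw [e3, e4]
  -- M3
  have hM3 : marg p {j, k} x
      = (marg P (Finset.Ici j) x * marg C (Finset.Iic j ∪ Finset.Ici k) x) * marg T (Finset.Iic k) x := by
    rw [hp2]
    rw [marg_mul P CT ({j, k} : Finset (Fin (M + 2))) (Finset.Ioi j \ {k}) x
      (by intro i hi
          simp only [Finset.mem_sdiff, Finset.mem_Ioi, Finset.mem_singleton, Finset.mem_insert,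
            Fin.lt_def, Fin.ext_iff] at *
          omega)
      (by intro z w h
          refine depP (Finset.Ioi j \ {k})ᶜ
            (by intro i hi
                simp only [Finset.mem_compl, Finset.mem_sdiff, Finset.mem_Ioi,
                  Finset.mem_singleton, Fin.lt_def]
                omega) z w (fun i hi => h i (Finset.mem_compl.mp hi)))
      (by intro z w h
          simp only [hCT]
          have hs : ∀ i : Fin (M + 2), j.val ≤ i.val →
              i ∈ ({j, k} : Finset (Fin (M + 2))) ∪ (Finset.Ioi j \ {k}) := by
            intro i hi
            simp only [Finset.mem_union, Finset.mem_insert, Finset.mem_singleton,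
              Finset.mem_sdiff, Finset.mem_Ioi, Fin.lt_def, Fin.ext_iff]
            omega
          rw [depC _ (fun i h1 _ => hs i h1) z w h, depT _ (fun i h1 => hs i (by omega)) z w h])]
    rw [e5, e6, mul_assoc]
    congr 1
    rw [hCT]
    rw [marg_mul C T (Finset.Iic j ∪ {k}) (Finset.Ioi k) x
      (by intro i hi
          simp only [Finset.mem_Ioi, Finset.mem_union, Finset.mem_Iic, Finset.mem_singleton,
            Fin.le_def, Fin.lt_def, Fin.ext_iff] at *
          omega)
      (by intro z w h
          have h' : ∀ i ∈ (Finset.Iic k : Finset (Fin (M + 2))), z i = w i := by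
            intro i hi
            refine h i ?_
            simp only [Finset.mem_Iic, Fin.le_def] at hi
            simp only [Finset.mem_Ioi, Fin.lt_def]
            omega
          exact depC (Finset.Iic k) (by intro i h1 h2; simp only [Finset.mem_Iic, Fin.le_def]; omega) z w h')
      (depT _ (by intro i hi
                  simp only [Finset.mem_union, Finset.mem_singleton, Finset.mem_Iic, Finset.mem_Ioi,
                    Fin.le_def, Fin.lt_def, Fin.ext_iff]
                  omega))]
    rw [e7, e2]
  -- M4
  have hM4 : marg p (Finset.Iic j) x = P x * marg CT (Finset.Iic j) x := by
    rw [hp2]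
    exact marg_const_mul P CT (Finset.Iic j) x
      (depP _ (by intro i hi; simp only [Finset.mem_Iic, Fin.le_def]; omega))
  rw [hM1, hM2, hM3, hM4]
  ring

lemma inv_symm_of_posdef {d : ℕ} (S : Matrix (Fin d) (Fin d) ℝ) (hS : S.PosDef) :
    (S⁻¹)ᵀ = S⁻¹ := by
  rw [Matrix.transpose_nonsing_inv]
  congr 1
  simpa using hS.1.eq

lemma dot_symm {d : ℕ} (A : Matrix (Fin d) (Fin d) ℝ) (hA : Aᵀ = A) (u v : Fin d → ℝ) :
    u ⬝ᵥ A *ᵥ v = v ⬝ᵥ A *ᵥ u := by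
  rw [Matrix.dotProduct_mulVec, ← Matrix.vecMul_transpose, hA, dotProduct_comm]

lemma mulVec_dot {d : ℕ} (A B : Matrix (Fin d) (Fin d) ℝ) (u v : Fin d → ℝ) :
    (A *ᵥ u) ⬝ᵥ B *ᵥ v = u ⬝ᵥ (Aᵀ * B) *ᵥ v := by
  rw [Matrix.dotProduct_mulVec,
    show A *ᵥ u = u ᵥ* Aᵀ from by rw [← Matrix.mulVec_transpose, Matrix.transpose_transpose],
    Matrix.vecMul_vecMul, ← Matrix.dotProduct_mulVec]

lemma gauss_shift {d : ℕ} (S : Matrix (Fin d) (Fin d) ℝ) (hS : (S⁻¹)ᵀ = S⁻¹)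
    (m w v : Fin d → ℝ) :
    gaussianPDF (m + w) S v
      = gaussianPDF m S v * Real.exp ((v - m) ⬝ᵥ S⁻¹ *ᵥ w)
          * Real.exp (-(1 / 2) * (w ⬝ᵥ S⁻¹ *ᵥ w)) := by
  unfold _root_.gaussianPDF
  rw [mul_assoc, mul_assoc, ← Real.exp_add, ← Real.exp_add]
  congr 2
  have h1 : v - (m + w) = (v - m) - w := by abel
  rw [h1]
  have h2 : ((v - m) - w) ⬝ᵥ S⁻¹ *ᵥ ((v - m) - w)
      = (v - m) ⬝ᵥ S⁻¹ *ᵥ (v - m) - 2 * ((v - m) ⬝ᵥ S⁻¹ *ᵥ w) + w ⬝ᵥ S⁻¹ *ᵥ w := by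
    simp only [Matrix.mulVec_sub, sub_dotProduct, dotProduct_sub]
    rw [dot_symm _ hS w v, dot_symm _ hS w m]
    ring
  rw [h2]; ring

noncomputable def aMat {d : ℕ} (G0N : Matrix (Fin d) (Fin d) ℝ)
    (GkN : ℕ → Matrix (Fin d) (Fin d) ℝ) (Gc0 : Matrix (Fin d) (Fin d) ℝ)
    (Gc : ℕ → Matrix (Fin d) (Fin d) ℝ) : ℕ → Matrix (Fin d) (Fin d) ℝ :=
  fun n => if n = 0 then Gc0⁻¹ * G0N else (Gc n)⁻¹ * GkN n

noncomputable def chainF {d : ℕ} (M : ℕ) (G0N : Matrix (Fin d) (Fin d) ℝ)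
    (Gkk1 GkN : ℕ → Matrix (Fin d) (Fin d) ℝ)
    (Gc0 GcN : Matrix (Fin d) (Fin d) ℝ) (Gc : ℕ → Matrix (Fin d) (Fin d) ℝ) :
    ℕ → (Fin d → ℝ) → (Fin d → ℝ) → ℝ := fun n u v =>
  (if n = 0 then gaussianPDF (0 : Fin d → ℝ) Gc0 u else 1) *
  (if n < M then gaussianPDF (Gkk1 (n + 1) *ᵥ u) (Gc (n + 1)) v
   else Real.exp (u ⬝ᵥ (aMat G0N GkN Gc0 Gc M) *ᵥ v) *
     (gaussianPDF (0 : Fin d → ℝ) GcN v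
       * Real.exp (-(1 / 2) * ((G0N *ᵥ v) ⬝ᵥ Gc0⁻¹ *ᵥ (G0N *ᵥ v)))
       * ∏ i ∈ Finset.range M,
           Real.exp (-(1 / 2) * ((GkN (i + 1) *ᵥ v) ⬝ᵥ (Gc (i + 1))⁻¹ *ᵥ (GkN (i + 1) *ᵥ v)))))

lemma cml_factor_s9 {d M : ℕ} (G0N : Matrix (Fin d) (Fin d) ℝ)
    (Gkk1 GkN : ℕ → Matrix (Fin d) (Fin d) ℝ)
    (Gc0 GcN : Matrix (Fin d) (Fin d) ℝ) (Gc : ℕ → Matrix (Fin d) (Fin d) ℝ)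
    (hGc0 : Gc0.PosDef) (hGc : ∀ k, (Gc k).PosDef)
    (hcond : ∀ n : ℕ, n < M →
      (Gkk1 (n + 1))ᵀ * (aMat G0N GkN Gc0 Gc (n + 1)) = aMat G0N GkN Gc0 Gc n)
    (x : Fin (M + 2) → (Fin d → ℝ)) :
    cmlDensity (N := M + 1) G0N Gkk1 GkN Gc0 GcN Gc x
      = ∏ i : Fin (M + 1),
          chainF M G0N Gkk1 GkN Gc0 GcN Gc i.val (x i.castSucc) (x i.succ) := by
  classical
  set xl := x (Fin.last (M + 1)) with hxl
  set a := aMat G0N GkN Gc0 Gc with haM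
  -- abbreviations for the building blocks
  set A : Fin M → ℝ := fun i =>
    gaussianPDF (Gkk1 (i.val + 1) *ᵥ x ⟨i.val, by omega⟩) (Gc (i.val + 1))
      (x ⟨i.val + 1, by omega⟩) with hA
  set s : ℕ → ℝ := fun n =>
    Real.exp (-(1 / 2) * ((GkN (n + 1) *ᵥ xl) ⬝ᵥ (Gc (n + 1))⁻¹ *ᵥ (GkN (n + 1) *ᵥ xl))) with hs
  set g : ℕ → ℝ := fun n =>
    if h : n < M + 2 then x ⟨n, h⟩ ⬝ᵥ a n *ᵥ xl else 0 with hg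
  have key : cmlDensity (N := M + 1) G0N Gkk1 GkN Gc0 GcN Gc x
      = gaussianPDF 0 GcN xl *
        (gaussianPDF 0 Gc0 (x 0) * Real.exp (g 0) *
          Real.exp (-(1 / 2) * ((G0N *ᵥ xl) ⬝ᵥ Gc0⁻¹ *ᵥ (G0N *ᵥ xl)))) *
        ((∏ i : Fin M, A i) * (∏ i : Fin M, Real.exp (g (i.val + 1) - g i.val)) *
          (∏ i : Fin M, s i.val)) := by
    have expand : cmlDensity (N := M + 1) G0N Gkk1 GkN Gc0 GcN Gc x
        = gaussianPDF 0 GcN xl * gaussianPDF (G0N *ᵥ xl) Gc0 (x 0) *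
          ∏ i : Fin M,
            gaussianPDF (Gkk1 (i.val + 1) *ᵥ x ⟨i.val, by omega⟩ + GkN (i.val + 1) *ᵥ xl)
              (Gc (i.val + 1)) (x ⟨i.val + 1, by omega⟩) := rfl
    rw [expand]
    have hmid : ∀ i : Fin M,
        gaussianPDF (Gkk1 (i.val + 1) *ᵥ x ⟨i.val, by omega⟩ + GkN (i.val + 1) *ᵥ xl)
            (Gc (i.val + 1)) (x ⟨i.val + 1, by omega⟩)
          = A i * Real.exp (g (i.val + 1) - g i.val) * s i.val := by
      intro i
      rw [gauss_shift _ (inv_symm_of_posdef _ (hGc _))]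
      simp only [hA, hs]
      congr 2
      rw [Matrix.mulVec_mulVec, sub_dotProduct, mulVec_dot]
      have e1 : (Gc (i.val + 1))⁻¹ * GkN (i.val + 1) = a (i.val + 1) := by
        simp [haM, aMat]
      rw [e1, hcond i.val i.isLt]
      simp only [hg]
      rw [dif_pos (show i.val + 1 < M + 2 by omega), dif_pos (show i.val < M + 2 by omega)]
    have hg0 : gaussianPDF (G0N *ᵥ xl) Gc0 (x 0)
        = gaussianPDF 0 Gc0 (x 0) * Real.exp (g 0) *
            Real.exp (-(1 / 2) * ((G0N *ᵥ xl) ⬝ᵥ Gc0⁻¹ *ᵥ (G0N *ᵥ xl))) := by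
      have harg : ((x 0 - 0) ⬝ᵥ Gc0⁻¹ *ᵥ (G0N *ᵥ xl)) = g 0 := by
        rw [sub_zero, Matrix.mulVec_mulVec]
        simp only [hg]
        rw [dif_pos (show (0 : ℕ) < M + 2 by omega)]
        have h0 : (⟨0, show (0 : ℕ) < M + 2 by omega⟩ : Fin (M + 2)) = 0 := by ext; simp
        rw [h0, haM]
        simp [aMat]
      rw [show (G0N *ᵥ xl) = 0 + G0N *ᵥ xl from (zero_add _).symm,
        gauss_shift Gc0 (inv_symm_of_posdef _ hGc0), harg]
      simp only [zero_add]
    rw [hg0, Finset.prod_congr rfl (fun i _ => hmid i), Finset.prod_mul_distrib,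
      Finset.prod_mul_distrib]
    try ring
  rw [key]
  -- now the right-hand side
  simp only [chainF]
  rw [Finset.prod_mul_distrib]
  have h1 : (∏ i : Fin (M + 1),
      if (i.val : ℕ) = 0 then gaussianPDF (0 : Fin d → ℝ) Gc0 (x i.castSucc) else 1)
      = gaussianPDF 0 Gc0 (x 0) := by
    rw [Finset.prod_eq_single (⟨0, by omega⟩ : Fin (M + 1))]
    · rw [if_pos rfl]
      congr 1
    · intro b _ hb
      rw [if_neg]
      intro hb0
      exact hb (by ext; simpa using hb0)
    · intro h; exact absurd (Finset.mem_univ _) h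
  rw [h1]
  rw [Fin.prod_univ_castSucc (f := fun i : Fin (M + 1) =>
    if (i.val : ℕ) < M then gaussianPDF (Gkk1 (i.val + 1) *ᵥ x i.castSucc) (Gc (i.val + 1)) (x i.succ)
    else Real.exp (x i.castSucc ⬝ᵥ (aMat G0N GkN Gc0 Gc M) *ᵥ x i.succ) *
      (gaussianPDF (0 : Fin d → ℝ) GcN (x i.succ)
        * Real.exp (-(1 / 2) * ((G0N *ᵥ x i.succ) ⬝ᵥ Gc0⁻¹ *ᵥ (G0N *ᵥ x i.succ)))
        * ∏ n ∈ Finset.range M,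
            Real.exp (-(1 / 2) * ((GkN (n + 1) *ᵥ x i.succ) ⬝ᵥ (Gc (n + 1))⁻¹ *ᵥ (GkN (n + 1) *ᵥ x i.succ)))))]
  have h2 : ∀ j : Fin M,
      (if ((j.castSucc).val : ℕ) < M then
        gaussianPDF (Gkk1 ((j.castSucc).val + 1) *ᵥ x j.castSucc.castSucc)
          (Gc ((j.castSucc).val + 1)) (x j.castSucc.succ)
      else Real.exp (x j.castSucc.castSucc ⬝ᵥ (aMat G0N GkN Gc0 Gc M) *ᵥ x j.castSucc.succ) *
        (gaussianPDF (0 : Fin d → ℝ) GcN (x j.castSucc.succ)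
          * Real.exp (-(1 / 2) * ((G0N *ᵥ x j.castSucc.succ) ⬝ᵥ Gc0⁻¹ *ᵥ (G0N *ᵥ x j.castSucc.succ)))
          * ∏ n ∈ Finset.range M,
              Real.exp (-(1 / 2) * ((GkN (n + 1) *ᵥ x j.castSucc.succ) ⬝ᵥ (Gc (n + 1))⁻¹ *ᵥ (GkN (n + 1) *ᵥ x j.castSucc.succ)))))
      = A j := by
    intro j
    rw [if_pos (show ((j.castSucc).val : ℕ) < M from j.isLt)]
    rfl
  rw [Finset.prod_congr rfl (fun j _ => h2 j)]
  have h3 : ((Fin.last M).val : ℕ) < M → False := by simp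
  rw [if_neg h3]
  have hsucc : x (Fin.last M).succ = xl := rfl
  have hcast : x (Fin.last M).castSucc = x ⟨M, by omega⟩ := rfl
  rw [hsucc, hcast]
  have h4 : Real.exp (g 0) * ∏ i : Fin M, Real.exp (g (i.val + 1) - g i.val)
      = Real.exp (x ⟨M, by omega⟩ ⬝ᵥ (aMat G0N GkN Gc0 Gc M) *ᵥ xl) := by
    rw [← Real.exp_sum, ← Real.exp_add]
    congr 1
    rw [Fin.sum_univ_eq_sum_range (fun n => g (n + 1) - g n) M, Finset.sum_range_sub g M]
    have : g M = x ⟨M, by omega⟩ ⬝ᵥ (aMat G0N GkN Gc0 Gc M) *ᵥ xl := by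
      simp only [hg]
      rw [dif_pos (show M < M + 2 by omega), haM]
    rw [← this]; ring
  have h5 : (∏ i : Fin M, s i.val)
      = ∏ n ∈ Finset.range M,
          Real.exp (-(1 / 2) * ((GkN (n + 1) *ᵥ xl) ⬝ᵥ (Gc (n + 1))⁻¹ *ᵥ (GkN (n + 1) *ᵥ xl))) := by
    rw [Fin.prod_univ_eq_prod_range (fun n => s n) M]
  rw [← h4, ← h5]
  ring

/-- If the $CM_L$ model parameters satisfy the reciprocal condition
$G_k^{-1}G_{k,N} = G_{k+1,k}'G_{k+1}^{-1}G_{k+1,N}$ for $k ∈ [1,N-2]$ and additionally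
$G_0^{-1}G_{0,N} = G_{1,0}'G_1^{-1}G_{1,N}$, then the governed sequence is Markov. -/
theorem cml_model_markov_condition {d N : ℕ} (G0N : Matrix (Fin d) (Fin d) ℝ)
    (Gkk1 GkN : ℕ → Matrix (Fin d) (Fin d) ℝ)
    (Gc0 GcN : Matrix (Fin d) (Fin d) ℝ) (Gc : ℕ → Matrix (Fin d) (Fin d) ℝ)
    (hGc0 : Gc0.PosDef) (hGcN : GcN.PosDef) (hGc : ∀ k, (Gc k).PosDef)
    (hrec : ∀ k : ℕ, 1 ≤ k → k ≤ N - 2 →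
      (Gc k)⁻¹ * GkN k = (Gkk1 (k + 1))ᵀ * (Gc (k + 1))⁻¹ * GkN (k + 1))
    (hmarkov : Gc0⁻¹ * G0N = (Gkk1 1)ᵀ * (Gc 1)⁻¹ * GkN 1) :
    IsMarkov (cmlDensity (N := N) G0N Gkk1 GkN Gc0 GcN Gc) := by
  cases N with
  | zero =>
      intro j k hjk x
      exact absurd (show j.val < k.val from hjk)
        (by have h1 := j.isLt; have h2 := k.isLt; omega)
  | succ M =>
      have hcond : ∀ n : ℕ, n < M →
          (Gkk1 (n + 1))ᵀ * (aMat G0N GkN Gc0 Gc (n + 1)) = aMat G0N GkN Gc0 Gc n := by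
        intro n hn
        by_cases h0 : n = 0
        · subst h0
          simp only [aMat, if_neg (Nat.one_ne_zero), if_pos rfl]
          rw [hmarkov, Matrix.mul_assoc]
          simp
        · simp only [aMat, if_neg h0, if_neg (Nat.succ_ne_zero n)]
          rw [hrec n (by omega) (by omega), Matrix.mul_assoc]
      exact isMarkov_chain (chainF M G0N Gkk1 GkN Gc0 GcN Gc)
        (cmlDensity (N := M + 1) G0N Gkk1 GkN Gc0 GcN Gc)
        (cml_factor_s9 G0N Gkk1 GkN Gc0 GcN Gc hGc0 hGc hcond)
end

section
/- Define $G_k = (M_k^{-1} + M_{N|k}' C_{N|k}^{-1} M_{N|k})^{-1}$, $G_{k,N} = G_k M_{N|k}' C_{N|k}^{-1}$, and $G_{k+1,k} = M_{k+1,k} - G_{k+1,N} M_{N|k} $, where $M_{N|k} = M_{N,N-1}\cdots M_{k+1,k}$, $C_{N|k} = \sum_{n=k}^{N-1} M_{N|n+1} M_{n+1} M_{N|n+1}'$, with all $M_n$ positive definite. Then the reciprocal condition $G_k^{-1} G_{k,N} = G_{k+1,k}' G_{k+1}^{-1} G_{k+1,N}$ holds for all $k \in [1, N-2]$. -/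
open MeasureTheory ProbabilityTheory Matrix

/-- $G_k = (M_k^{-1} + M_{N|k}' C_{N|k}^{-1} M_{N|k})^{-1}$ of the induced $CM_L$ model. -/
noncomputable def Gcov {d : ℕ} (F M : ℕ → Matrix (Fin d) (Fin d) ℝ) (N k : ℕ) :
    Matrix (Fin d) (Fin d) ℝ :=
  ((M k)⁻¹ + (Mtrans F N k)ᵀ * (Ctrans F M N k)⁻¹ * Mtrans F N k)⁻¹

/-- $G_{k,N} = G_k M_{N|k}' C_{N|k}^{-1}$ of the induced $CM_L$ model. -/
noncomputable def GkN {d : ℕ} (F M : ℕ → Matrix (Fin d) (Fin d) ℝ) (N k : ℕ) :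
    Matrix (Fin d) (Fin d) ℝ :=
  Gcov F M N k * (Mtrans F N k)ᵀ * (Ctrans F M N k)⁻¹

lemma Mtrans_self {d : ℕ} (F : ℕ → Matrix (Fin d) (Fin d) ℝ) (N : ℕ) :
    Mtrans F N N = 1 := by
  simp [Mtrans]

lemma Mtrans_succ {d : ℕ} (F : ℕ → Matrix (Fin d) (Fin d) ℝ) (N k : ℕ) (h : k < N) :
    Mtrans F N k = Mtrans F N (k + 1) * F (k + 1) := by
  unfold Mtrans
  rw [List.Ico.eq_cons (by omega : k + 1 < N + 1)]
  simp

lemma Ctrans_succ {d : ℕ} (F M : ℕ → Matrix (Fin d) (Fin d) ℝ) (N k : ℕ) (h : k < N) :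
    Ctrans F M N k
      = Mtrans F N (k + 1) * M (k + 1) * (Mtrans F N (k + 1))ᵀ + Ctrans F M N (k + 1) := by
  unfold Ctrans
  rw [Finset.sum_eq_sum_Ico_succ_bot h]

lemma Ctrans_posDef {d N : ℕ} (F M : ℕ → Matrix (Fin d) (Fin d) ℝ)
    (hM : ∀ k, (M k).PosDef) : ∀ k, k < N → (Ctrans F M N k).PosDef := by
  have key : ∀ j k, k < N → N - k = j + 1 → (Ctrans F M N k).PosDef := by
    intro j
    induction j with
    | zero =>
      intro k hk hj
      have hN : N = k + 1 := by omega
      subst hN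
      unfold Ctrans
      rw [Finset.sum_Ico_eq_sum_range]
      simp [Mtrans_self]
      have h1 : (1 : Matrix (Fin d) (Fin d) ℝ)ᵀ = 1 := Matrix.transpose_one
      simpa [h1] using hM (k + 1)
    | succ j ih =>
      intro k hk hj
      rw [Ctrans_succ F M N k hk]
      have hpsd : (Mtrans F N (k + 1) * M (k + 1) * (Mtrans F N (k + 1))ᵀ).PosSemidef := by
        have := (hM (k + 1)).posSemidef.mul_mul_conjTranspose_same (Mtrans F N (k + 1))
        rwa [Matrix.conjTranspose_eq_transpose_of_trivial] at this
      exact Matrix.PosDef.posSemidef_add hpsd (ih (k + 1) (by omega) (by omega))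
  exact fun k hk => key (N - k - 1) k hk (by omega)

/-- The $CM_L$ model induced by a Markov model satisfies the reciprocal parameter
condition $G_k^{-1} G_{k,N} = G_{k+1,k}' G_{k+1}^{-1} G_{k+1,N}$ for $k ∈ [1,N-2]$,
where $G_{k+1,k} = M_{k+1,k} - G_{k+1,N} M_{N|k}$. -/
theorem induced_model_reciprocal_condition {d N : ℕ}
    (F M : ℕ → Matrix (Fin d) (Fin d) ℝ) (hM : ∀ k, (M k).PosDef) :
    ∀ k : ℕ, 1 ≤ k → k ≤ N - 2 →
      (Gcov F M N k)⁻¹ * GkN F M N k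
        = (F (k + 1) - GkN F M N (k + 1) * Mtrans F N k)ᵀ
            * (Gcov F M N (k + 1))⁻¹ * GkN F M N (k + 1) := by
  intro k hk1 hk2
  have hN3 : 3 ≤ N := by omega
  have hkN : k + 1 < N := by omega
  set B := Mtrans F N (k + 1) with hBdef
  set Fk := F (k + 1) with hFkdef
  set C := Ctrans F M N k with hCdef
  set C' := Ctrans F M N (k + 1) with hC'def
  set M1 := M (k + 1) with hM1def
  have hA : Mtrans F N k = B * Fk := Mtrans_succ F N k (by omega)
  have hCrec : C = B * M1 * Bᵀ + C' := Ctrans_succ F M N k (by omega)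
  have hC : C.PosDef := Ctrans_posDef F M hM k (by omega)
  have hC' : C'.PosDef := Ctrans_posDef F M hM (k + 1) hkN
  -- X = G_k⁻¹, Y = G_{k+1}⁻¹
  set X := (M k)⁻¹ + (Mtrans F N k)ᵀ * C⁻¹ * Mtrans F N k with hXdef
  set Y := M1⁻¹ + Bᵀ * C'⁻¹ * B with hYdef
  have hX : X.PosDef := by
    refine (hM k).inv.add_posSemidef ?_
    have := hC.inv.posSemidef.conjTranspose_mul_mul_same (Mtrans F N k)
    rwa [Matrix.conjTranspose_eq_transpose_of_trivial] at this
  have hY : Y.PosDef := by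
    refine (hM (k + 1)).inv.add_posSemidef ?_
    have := hC'.inv.posSemidef.conjTranspose_mul_mul_same B
    rwa [Matrix.conjTranspose_eq_transpose_of_trivial] at this
  haveI := hX.isUnit.invertible
  haveI := hY.isUnit.invertible
  haveI := hC.isUnit.invertible
  haveI := hC'.isUnit.invertible
  haveI := (hM (k + 1)).isUnit.invertible
  haveI := (hM (k + 1)).inv.isUnit.invertible
  have hGcovk : Gcov F M N k = X⁻¹ := rfl
  have hGcovk1 : Gcov F M N (k + 1) = Y⁻¹ := by
    rw [Gcov, ← hBdef, ← hC'def, ← hM1def, ← hYdef]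
  -- key Woodbury-type identity
  have h1 : Y * (M1 * Bᵀ) = Bᵀ * (C'⁻¹ * C) := by
    rw [hCrec, hYdef]
    simp only [Matrix.add_mul, Matrix.mul_add, Matrix.mul_assoc,
      Matrix.inv_mul_cancel_left_of_invertible, Matrix.inv_mul_of_invertible, Matrix.mul_one]
    abel
  have h2 : M1 * Bᵀ = Y⁻¹ * (Bᵀ * (C'⁻¹ * C)) := by
    rw [← h1, Matrix.inv_mul_cancel_left_of_invertible]
  have hkey : Bᵀ * C⁻¹ = M1⁻¹ * (Y⁻¹ * (Bᵀ * C'⁻¹)) := by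
    have h3 : M1 * (Bᵀ * C⁻¹) = Y⁻¹ * (Bᵀ * C'⁻¹) := by
      calc M1 * (Bᵀ * C⁻¹) = (M1 * Bᵀ) * C⁻¹ := by rw [Matrix.mul_assoc]
        _ = Y⁻¹ * (Bᵀ * (C'⁻¹ * (C * C⁻¹))) := by
            rw [h2]; simp only [Matrix.mul_assoc]
        _ = Y⁻¹ * (Bᵀ * C'⁻¹) := by rw [Matrix.mul_inv_of_invertible, Matrix.mul_one]
    rw [← h3, Matrix.inv_mul_cancel_left_of_invertible]
  -- simplify the G_{k+1,k} factor
  have hGfac : Fk - GkN F M N (k + 1) * Mtrans F N k = Y⁻¹ * (M1⁻¹ * Fk) := by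
    have hM1inv : M1⁻¹ = Y - Bᵀ * C'⁻¹ * B := by rw [hYdef]; abel
    rw [GkN, hGcovk1, ← hBdef, ← hC'def, hA, hM1inv]
    simp only [Matrix.mul_sub, Matrix.sub_mul, Matrix.mul_assoc,
      Matrix.inv_mul_cancel_left_of_invertible]
  -- symmetry facts
  have hM1T : (M1⁻¹)ᵀ = M1⁻¹ := by
    have := (hM (k + 1)).inv.isHermitian
    rwa [Matrix.IsHermitian, Matrix.conjTranspose_eq_transpose_of_trivial] at this
  have hYT : (Y⁻¹)ᵀ = Y⁻¹ := by
    have := hY.inv.isHermitian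
    rwa [Matrix.IsHermitian, Matrix.conjTranspose_eq_transpose_of_trivial] at this
  rw [hGfac, GkN, GkN, hGcovk, hGcovk1, ← hBdef, ← hC'def, ← hCdef,
    Matrix.inv_inv_of_invertible, Matrix.inv_inv_of_invertible, hA]
  simp only [Matrix.transpose_mul, hM1T, hYT, Matrix.mul_assoc,
    Matrix.mul_inv_cancel_left_of_invertible, Matrix.inv_mul_cancel_left_of_invertible, hkey]
end
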